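/- Let T = (V,E) be a finite tree and let b^i (i ∈ {1,…,ℓ}) be nonnegative cut values satisfying the sub-additive property. Then LP^L(T) = LP^U(T), and moreover both optimum values equal Σ_{e∈E} Σ_{i=1}^ℓ b^i(C_e). -/

import Mathlib

open Finset
open scoped Classical
set_option linter.unusedSectionVars false
set_option linter.unusedVariables false
set_option maxHeartbeats 1000000

variable {V : Type} [Fintype V] [DecidableEq V]

/-- A cut of a graph on vertex set `V`: a nonempty proper subset of the vertices. -/
def IsCut (C : Finset V) : Prop := C.Nonempty ∧ C ≠ Finset.univ

/-- The unordered pair `e` crosses the cut `C`: exactly one of its endpoints lies in `C`. -/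
def Crosses (C : Finset V) (e : Sym2 V) : Prop :=
  ∃ u v, e = s(u, v) ∧ u ∈ C ∧ v ∉ C

/-- `δ(C)`: the edges of `G` with exactly one endpoint in `C`. -/
noncomputable def cutEdges (G : SimpleGraph V) (C : Finset V) : Finset (Sym2 V) :=
  G.edgeFinset.filter (Crosses C)

/-- The optimum value of `LP^L(G)`: minimize `∑_{e∈E} x_e` subject to
`∑_{e∈δ(C)} x_e ≥ ∑_i b^i(C)` for every cut `C`, `x ≥ 0`. -/
noncomputable def LPL (G : SimpleGraph V) (ℓ : ℕ) (b : Fin ℓ → Finset V → ℝ) : ℝ :=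
  sInf { y | ∃ x : Sym2 V → ℝ, (∀ e, 0 ≤ x e) ∧
    (∀ C : Finset V, IsCut C → ∑ i, b i C ≤ ∑ e ∈ cutEdges G C, x e) ∧
    y = ∑ e ∈ G.edgeFinset, x e }

/-- The optimum value of `LP^U(G)`: minimize `∑_i ∑_{e∈E} x_{i,e}` subject to
`∑_{e∈δ(C)} x_{i,e} ≥ b^i(C)` for every cut `C` and every `i`, `x ≥ 0`. -/
noncomputable def LPU (G : SimpleGraph V) (ℓ : ℕ) (b : Fin ℓ → Finset V → ℝ) : ℝ :=
  sInf { y | ∃ x : Fin ℓ → Sym2 V → ℝ, (∀ i e, 0 ≤ x i e) ∧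
    (∀ (i : Fin ℓ) (C : Finset V), IsCut C → b i C ≤ ∑ e ∈ cutEdges G C, x i e) ∧
    y = ∑ i, ∑ e ∈ G.edgeFinset, x i e }

/-- The cut values `b` satisfy the sub-additive property. -/
def SubAdd (ℓ : ℕ) (b : Fin ℓ → Finset V → ℝ) : Prop :=
  ∀ (i : Fin ℓ) (C₁ C₂ : Finset V), IsCut C₁ → IsCut C₂ → IsCut (C₁ ∪ C₂) →
    b i (C₁ ∪ C₂) ≤ b i C₁ + b i C₂

/-- The cut values `b` are nonnegative on cuts. -/
def CutNonneg (ℓ : ℕ) (b : Fin ℓ → Finset V → ℝ) : Prop :=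
  ∀ (i : Fin ℓ) (C : Finset V), IsCut C → 0 ≤ b i C

/-- For an edge `e` of a tree `G`, `compCut G e` is the vertex set of one of the two connected
components of `G` with `e` removed (the one containing one fixed endpoint of `e`). -/
noncomputable def compCut (G : SimpleGraph V) (e : Sym2 V) : Finset V :=
  Finset.univ.filter fun w => (G.deleteEdges {e}).Reachable (Quot.out e).1 w


noncomputable def side (G : SimpleGraph V) (e : Sym2 V) (p : V) : Finset V :=
  Finset.univ.filter fun w => (G.deleteEdges {e}).Reachable p w

lemma mem_side {G : SimpleGraph V} {e : Sym2 V} {p w : V} :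
    w ∈ side G e p ↔ (G.deleteEdges {e}).Reachable p w := by
  simp [side]

lemma compCut_eq_side (G : SimpleGraph V) (e : Sym2 V) :
    compCut G e = side G e (Quot.out e).1 := rfl

lemma self_mem_side {G : SimpleGraph V} (e : Sym2 V) (p : V) : p ∈ side G e p :=
  mem_side.mpr (SimpleGraph.Reachable.refl p)

lemma bridge_not_reach {G : SimpleGraph V} (hac : G.IsAcyclic) {p q : V} (h : G.Adj p q) :
    ¬ (G.deleteEdges {s(p,q)}).Reachable p q := by
  have := (SimpleGraph.isAcyclic_iff_forall_adj_isBridge.mp hac) h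
  rw [SimpleGraph.isBridge_iff] at this
  exact this

lemma reach_or_aux {G : SimpleGraph V} {e : Sym2 V} {p q : V} (he : e = s(p,q)) :
    ∀ {x z : V}, (W : G.Walk x z) →
      (G.deleteEdges {e}).Reachable x z ∨
      (((G.deleteEdges {e}).Reachable x p ∨ (G.deleteEdges {e}).Reachable x q) ∧
       ((G.deleteEdges {e}).Reachable z p ∨ (G.deleteEdges {e}).Reachable z q)) := by
  intro x z W
  induction W with
  | nil => exact Or.inl (SimpleGraph.Reachable.refl _)
  | @cons x y z h W ih =>
    by_cases hxy : s(x, y) = e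
    · -- {x,y} = {p,q}
      rw [he, Sym2.eq_iff] at hxy
      have hx : (G.deleteEdges {e}).Reachable x p ∨ (G.deleteEdges {e}).Reachable x q := by
        rcases hxy with ⟨h1, _⟩ | ⟨h1, _⟩
        · exact Or.inl (h1 ▸ SimpleGraph.Reachable.refl _)
        · exact Or.inr (h1 ▸ SimpleGraph.Reachable.refl _)
      have hy : (G.deleteEdges {e}).Reachable y p ∨ (G.deleteEdges {e}).Reachable y q := by
        rcases hxy with ⟨_, h2⟩ | ⟨_, h2⟩
        · exact Or.inr (h2 ▸ SimpleGraph.Reachable.refl _)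
        · exact Or.inl (h2 ▸ SimpleGraph.Reachable.refl _)
      refine Or.inr ⟨hx, ?_⟩
      rcases ih with hz | ⟨_, hz⟩
      · rcases hy with hy | hy
        · exact Or.inl (hz.symm.trans hy)
        · exact Or.inr (hz.symm.trans hy)
      · exact hz
    · have hadj : (G.deleteEdges {e}).Adj x y :=
        SimpleGraph.deleteEdges_adj.mpr ⟨h, by simpa using hxy⟩
      rcases ih with hz | ⟨hy, hz⟩
      · exact Or.inl ((SimpleGraph.Adj.reachable hadj).trans hz)
      · refine Or.inr ⟨?_, hz⟩
        rcases hy with hy | hy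
        · exact Or.inl ((SimpleGraph.Adj.reachable hadj).trans hy)
        · exact Or.inr ((SimpleGraph.Adj.reachable hadj).trans hy)

lemma side_partition {G : SimpleGraph V} (htree : G.IsTree) {p q : V} (h : G.Adj p q)
    (z : V) : z ∈ side G (s(p,q)) p ∨ z ∈ side G (s(p,q)) q := by
  obtain ⟨W⟩ := htree.isConnected.1 p z
  rcases reach_or_aux rfl W with hz | ⟨_, hz⟩
  · exact Or.inl (mem_side.mpr hz)
  · rcases hz with hz | hz
    · exact Or.inl (mem_side.mpr hz.symm)
    · exact Or.inr (mem_side.mpr hz.symm)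

lemma side_compl {G : SimpleGraph V} (htree : G.IsTree) {p q : V} (h : G.Adj p q) :
    side G (s(p,q)) q = (side G (s(p,q)) p)ᶜ := by
  ext z
  simp only [Finset.mem_compl]
  constructor
  · intro hq hp
    exact bridge_not_reach htree.IsAcyclic h ((mem_side.mp hp).trans (mem_side.mp hq).symm)
  · intro hp
    rcases side_partition htree h z with h' | h'
    · exact absurd h' hp
    · exact h'

lemma mem_cutEdges {G : SimpleGraph V} {C : Finset V} {f : Sym2 V} :
    f ∈ cutEdges G C ↔ f ∈ G.edgeFinset ∧ Crosses C f := Finset.mem_filter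

lemma side_isCut {G : SimpleGraph V} (htree : G.IsTree) {p q : V} (h : G.Adj p q) :
    IsCut (side G (s(p,q)) p) := by
  refine ⟨⟨p, self_mem_side _ _⟩, ?_⟩
  intro hu
  have : q ∈ side G (s(p,q)) p := hu ▸ Finset.mem_univ q
  exact bridge_not_reach htree.IsAcyclic h (mem_side.mp this)

lemma cutEdges_side {G : SimpleGraph V} (htree : G.IsTree) {p q : V} (h : G.Adj p q) :
    cutEdges G (side G (s(p,q)) p) = {s(p,q)} := by
  ext f
  simp only [Finset.mem_singleton]
  constructor
  · rintro hf
    obtain ⟨hfe, a, b, rfl, ha, hb⟩ := mem_cutEdges.mp hf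
    by_contra hne
    have hadj : (G.deleteEdges {s(p,q)}).Adj a b := by
      refine SimpleGraph.deleteEdges_adj.mpr ⟨?_, by simpa using hne⟩
      exact SimpleGraph.mem_edgeFinset.mp hfe
    exact hb (mem_side.mpr ((mem_side.mp ha).trans hadj.reachable))
  · rintro rfl
    refine mem_cutEdges.mpr ⟨SimpleGraph.mem_edgeFinset.mpr h, p, q, rfl, self_mem_side _ _, ?_⟩
    intro hq
    exact bridge_not_reach htree.IsAcyclic h (mem_side.mp hq)

lemma crosses_compl {C : Finset V} {f : Sym2 V} : Crosses Cᶜ f ↔ Crosses C f := by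
  constructor <;> rintro ⟨u, v, rfl, hu, hv⟩
  · exact ⟨v, u, Sym2.eq_swap, by simpa using hv, by simpa using hu⟩
  · exact ⟨v, u, Sym2.eq_swap, Finset.mem_compl.mpr hv, by simp [Finset.mem_compl, hu]⟩

lemma cutEdges_compl {G : SimpleGraph V} (C : Finset V) : cutEdges G Cᶜ = cutEdges G C := by
  ext f; simp [mem_cutEdges, crosses_compl]

lemma isCut_compl {C : Finset V} (h : IsCut C) : IsCut Cᶜ := by
  obtain ⟨⟨x, hx⟩, hne⟩ := h
  constructor
  · obtain ⟨y, hy⟩ : ∃ y, y ∉ C := by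
      by_contra hall
      push_neg at hall
      exact hne (Finset.eq_univ_iff_forall.mpr hall)
    exact ⟨y, Finset.mem_compl.mpr hy⟩
  · intro hu
    have : x ∈ Cᶜ := hu ▸ Finset.mem_univ x
    exact (Finset.mem_compl.mp this) hx

lemma exists_crossing {H : SimpleGraph V} {C : Finset V} :
    ∀ {x w : V}, (W : H.Walk x w) → x ∈ C → w ∉ C →
    ∃ a b, H.Adj a b ∧ H.Reachable x a ∧ a ∈ C ∧ b ∉ C := by
  intro x w W
  induction W with
  | nil => intro hx hw; exact absurd hx hw
  | @cons x y w h W ih =>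
    intro hx hw
    by_cases hy : y ∈ C
    · obtain ⟨a, b, hab, hra, ha, hb⟩ := ih hy hw
      exact ⟨a, b, hab, h.reachable.trans hra, ha, hb⟩
    · exact ⟨x, y, h, SimpleGraph.Reachable.refl x, hx, hy⟩

lemma reach_transfer {G : SimpleGraph V} {f f' : Sym2 V} :
    ∀ {q z : V}, (G.deleteEdges {f}).Walk q z →
    (∀ x y, (G.deleteEdges {f}).Adj x y → (G.deleteEdges {f}).Reachable q x → s(x,y) ≠ f') →
    (G.deleteEdges {f'}).Reachable q z := by
  intro q z W
  induction W with
  | nil => intro _; exact SimpleGraph.Reachable.refl _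
  | @cons q y z h W ih =>
    intro hcond
    have hne : s(q, y) ≠ f' := hcond q y h (SimpleGraph.Reachable.refl q)
    have hadj : (G.deleteEdges {f'}).Adj q y :=
      SimpleGraph.deleteEdges_adj.mpr ⟨(SimpleGraph.deleteEdges_adj.mp h).1, by simpa using hne⟩
    refine hadj.reachable.trans (ih ?_)
    intro x y' hxy hyx
    exact hcond x y' hxy (h.reachable.trans hyx)

lemma out_spec (e : Sym2 V) : e = s((Quot.out e).1, (Quot.out e).2) := by
  conv_lhs => rw [← Quot.out_eq e]

lemma descent {G : SimpleGraph V} (htree : G.IsTree) {f : Sym2 V} {r q' a b : V}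
    (hrq : G.Adj r q') (hf : f = s(r, q'))
    (hab : (G.deleteEdges {f}).Adj a b)
    (haT : a ∈ side G f r) (hbT : b ∈ side G f r)
    (hq : q' ∈ side G (s(a,b)) a) :
    side G (s(a,b)) b ⊂ side G f r := by
  have hGab : G.Adj a b := (SimpleGraph.deleteEdges_adj.mp hab).1
  have hne : s(a,b) ≠ f := by
    have := (SimpleGraph.deleteEdges_adj.mp hab).2
    simpa using this
  subst hf
  have hcomplsub : (side G (s(r,q')) r)ᶜ ⊆ side G (s(a,b)) a := by
    intro z hz
    have hz' : z ∈ side G (s(r,q')) q' := by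
      rcases side_partition htree hrq z with h' | h'
      · exact absurd h' (Finset.mem_compl.mp hz)
      · exact h'
    obtain ⟨W⟩ := mem_side.mp hz'
    have hreach : (G.deleteEdges {s(a,b)}).Reachable q' z := by
      refine reach_transfer W ?_
      intro x y hxy hqx heq
      have hxmem : x ∈ (side G (s(r,q')) r)ᶜ := by
        rw [← side_compl htree hrq]
        exact mem_side.mpr hqx
      have hxT : x ∈ side G (s(r,q')) r := by
        rw [Sym2.eq_iff] at heq
        rcases heq with ⟨rfl, rfl⟩ | ⟨rfl, rfl⟩
        · exact haT
        · exact hbT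
      exact (Finset.mem_compl.mp hxmem) hxT
    exact mem_side.mpr ((mem_side.mp hq).trans hreach)
  have hsub : side G (s(a,b)) b ⊆ side G (s(r,q')) r := by
    rw [side_compl htree hGab]
    intro z hz
    by_contra hzT
    exact (Finset.mem_compl.mp hz) (hcomplsub (Finset.mem_compl.mpr hzT))
  refine Finset.ssubset_def.mpr ⟨hsub, fun hsup => ?_⟩
  have : a ∈ side G (s(a,b)) b := hsup haT
  rw [side_compl htree hGab] at this
  exact (Finset.mem_compl.mp this) (self_mem_side _ _)

lemma cutEdges_nonempty {G : SimpleGraph V} (htree : G.IsTree) {C : Finset V} (hC : IsCut C) :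
    (cutEdges G C).Nonempty := by
  obtain ⟨⟨x, hx⟩, hne⟩ := hC
  obtain ⟨w, hw⟩ : ∃ w, w ∉ C := by
    by_contra hall; push_neg at hall
    exact hne (Finset.eq_univ_iff_forall.mpr hall)
  obtain ⟨W⟩ := htree.isConnected.1 x w
  obtain ⟨a, b, hab, _, ha, hb⟩ := exists_crossing W hx hw
  exact ⟨s(a,b), mem_cutEdges.mpr ⟨SimpleGraph.mem_edgeFinset.mpr hab, a, b, rfl, ha, hb⟩⟩

lemma exists_good_side {G : SimpleGraph V} (htree : G.IsTree) {C : Finset V} (hC : IsCut C) :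
    ∃ (f : Sym2 V) (r q' : V), f ∈ cutEdges G C ∧ G.Adj r q' ∧ f = s(r, q') ∧
      (side G f r ⊆ C ∨ ∀ x ∈ side G f r, x ∉ C) := by
  classical
  set P : Finset V → Prop := fun T => ∃ f, f ∈ cutEdges G C ∧ ∃ r q', G.Adj r q' ∧ f = s(r,q') ∧
      T = side G f r with hP
  have hTne : (Finset.univ.filter P).Nonempty := by
    obtain ⟨f, hf⟩ := cutEdges_nonempty htree hC
    obtain ⟨hfe, u, v, hfs, hu, hv⟩ := mem_cutEdges.mp hf
    have hadj : G.Adj u v := by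
      rw [SimpleGraph.mem_edgeFinset, hfs] at hfe
      exact hfe
    exact ⟨side G f u, Finset.mem_filter.mpr ⟨Finset.mem_univ _, f, hf, u, v, hadj, hfs, rfl⟩⟩
  obtain ⟨T, hT, hmin⟩ := Finset.exists_min_image (Finset.univ.filter P) Finset.card hTne
  obtain ⟨_, f, hf, r, q', hrq, hfs, hTs⟩ := Finset.mem_filter.mp hT
  refine ⟨f, r, q', hf, hrq, hfs, ?_⟩
  by_contra hcon
  push_neg at hcon
  obtain ⟨hns, x, hxT, hxC⟩ := hcon
  obtain ⟨w, hwT, hwC⟩ : ∃ w ∈ side G f r, w ∉ C := by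
    rw [Finset.subset_iff] at hns
    push_neg at hns
    obtain ⟨w, hw1, hw2⟩ := hns
    exact ⟨w, hw1, hw2⟩
  -- crossing edge inside T
  have hRxw : (G.deleteEdges {f}).Reachable x w :=
    (mem_side.mp hxT).symm.trans (mem_side.mp hwT)
  obtain ⟨W⟩ := hRxw
  obtain ⟨a, b, hab, hxa, haC, hbC⟩ := exists_crossing W hxC hwC
  have haT : a ∈ side G f r := mem_side.mpr ((mem_side.mp hxT).trans hxa)
  have hbT : b ∈ side G f r := mem_side.mpr ((mem_side.mp haT).trans hab.reachable)
  have hGab : G.Adj a b := (SimpleGraph.deleteEdges_adj.mp hab).1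
  have hfnew : s(a,b) ∈ cutEdges G C :=
    mem_cutEdges.mpr ⟨SimpleGraph.mem_edgeFinset.mpr hGab, a, b, rfl, haC, hbC⟩
  rcases side_partition htree hGab q' with hqa | hqb
  · have hss := descent htree hrq hfs hab haT hbT hqa
    have hmem : side G (s(a,b)) b ∈ Finset.univ.filter P :=
      Finset.mem_filter.mpr ⟨Finset.mem_univ _, s(a,b), hfnew, b, a, hGab.symm,
        Sym2.eq_swap.symm, by rw [Sym2.eq_swap]⟩
    have := hmin _ hmem
    rw [hTs] at this
    exact absurd (Finset.card_lt_card hss) (not_lt.mpr this)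
  · have hab' : (G.deleteEdges {f}).Adj b a := hab.symm
    have hqb' : q' ∈ side G (s(b,a)) b := by rw [Sym2.eq_swap]; exact hqb
    have hss := descent htree hrq hfs hab' hbT haT hqb'
    have hmem : side G (s(b,a)) a ∈ Finset.univ.filter P :=
      Finset.mem_filter.mpr ⟨Finset.mem_univ _, s(a,b), hfnew, a, b, hGab,
        rfl, by rw [Sym2.eq_swap]⟩
    have := hmin _ hmem
    rw [hTs] at this
    exact absurd (Finset.card_lt_card hss) (not_lt.mpr this)

lemma compCut_spec {G : SimpleGraph V} (htree : G.IsTree) {e : Sym2 V}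
    (he : e ∈ G.edgeFinset) :
    IsCut (compCut G e) ∧ cutEdges G (compCut G e) = {e} ∧
    ∃ o1 o2 : V, G.Adj o1 o2 ∧ e = s(o1, o2) ∧ compCut G e = side G e o1 := by
  set o1 := (Quot.out e).1 with h1
  set o2 := (Quot.out e).2 with h2
  have he2 : e = s(o1, o2) := out_spec e
  have hadj : G.Adj o1 o2 := by
    rw [SimpleGraph.mem_edgeFinset, he2] at he
    exact he
  have hcs : compCut G e = side G e o1 := rfl
  constructor
  · rw [hcs, he2]; exact side_isCut htree hadj
  refine ⟨?_, o1, o2, hadj, he2, hcs⟩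
  rw [hcs, he2]
  exact cutEdges_side htree hadj

lemma b_side_eq {G : SimpleGraph V} (htree : G.IsTree) {ℓ : ℕ} {b : Fin ℓ → Finset V → ℝ}
    (hsymm : ∀ (i : Fin ℓ) (C : Finset V), IsCut C → b i C = b i Cᶜ)
    {e : Sym2 V} {r q' : V} (hrq : G.Adj r q') (hfs : e = s(r, q')) (i : Fin ℓ) :
    b i (side G e r) = b i (compCut G e) := by
  have he : e ∈ G.edgeFinset := by
    rw [SimpleGraph.mem_edgeFinset, hfs]; exact hrq
  obtain ⟨hcut, _, o1, o2, hadj, he2, hcs⟩ := compCut_spec htree he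
  have : s(r, q') = s(o1, o2) := by rw [← hfs, he2]
  rw [Sym2.eq_iff] at this
  rcases this with ⟨rfl, rfl⟩ | ⟨rfl, rfl⟩
  · rw [hcs]
  · have h2 : side G e r = (compCut G e)ᶜ := by
      rw [hcs, he2]
      exact side_compl htree hadj
    rw [h2]
    exact (hsymm i _ hcut).symm

lemma keyB {G : SimpleGraph V} (htree : G.IsTree) {ℓ : ℕ} {b : Fin ℓ → Finset V → ℝ}
    (hb : CutNonneg ℓ b)
    (hsymm : ∀ (i : Fin ℓ) (C : Finset V), IsCut C → b i C = b i Cᶜ)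
    (hsub : SubAdd ℓ b) :
    ∀ (n : ℕ) (C : Finset V), (cutEdges G C).card ≤ n → IsCut C → ∀ i : Fin ℓ,
      b i C ≤ ∑ e ∈ cutEdges G C, b i (compCut G e) := by
  intro n
  induction n with
  | zero =>
    intro C hcard hC i
    obtain ⟨f, hf⟩ := cutEdges_nonempty htree hC
    rw [Nat.le_zero, Finset.card_eq_zero] at hcard
    rw [hcard] at hf
    exact absurd hf (Finset.notMem_empty f)
  | succ n ih =>
    -- auxiliary claim, for the case the good side is inside the cut
    have aux : ∀ (C : Finset V), (cutEdges G C).card ≤ n + 1 → IsCut C →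
        ∀ (f : Sym2 V) (r q' : V), f ∈ cutEdges G C → G.Adj r q' → f = s(r, q') →
        side G f r ⊆ C → ∀ i : Fin ℓ,
        b i C ≤ ∑ e ∈ cutEdges G C, b i (compCut G e) := by
      intro C hcard hC f r q' hf hrq hfs hsubC i
      have hbside : b i (side G f r) = b i (compCut G f) := b_side_eq htree hsymm hrq hfs i
      subst hfs
      have hTcut : IsCut (side G (s(r,q')) r) := side_isCut htree hrq
      have hrT : r ∈ side G (s(r,q')) r := self_mem_side _ _
      have hq'T : q' ∉ side G (s(r,q')) r := by
        intro hq
        exact bridge_not_reach htree.IsAcyclic hrq (mem_side.mp hq)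
      have hq'C : q' ∉ C := by
        obtain ⟨_, u, v, huv, hu, hv⟩ := mem_cutEdges.mp hf
        rw [Sym2.eq_iff] at huv
        rcases huv with ⟨rfl, rfl⟩ | ⟨rfl, rfl⟩
        · exact hv
        · exact absurd (hsubC hrT) hv
      by_cases hTC : side G (s(r,q')) r = C
      · rw [← hTC, cutEdges_side htree hrq, Finset.sum_singleton, ← hTC] at *
        exact le_of_eq hbside
      · obtain ⟨z, hz⟩ : (C \ side G (s(r,q')) r).Nonempty := by
          rw [Finset.sdiff_nonempty]
          intro hsub'
          exact hTC (Finset.Subset.antisymm hsubC hsub')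
        have hCut2 : IsCut (C \ side G (s(r,q')) r) := by
          refine ⟨⟨z, hz⟩, ?_⟩
          intro hu
          have : r ∈ C \ side G (s(r,q')) r := hu ▸ Finset.mem_univ r
          exact (Finset.mem_sdiff.mp this).2 hrT
        have hunion : side G (s(r,q')) r ∪ (C \ side G (s(r,q')) r) = C :=
          Finset.union_sdiff_of_subset hsubC
        have hsplit : b i C ≤ b i (side G (s(r,q')) r) + b i (C \ side G (s(r,q')) r) := by
          have := hsub i _ _ hTcut hCut2 (hunion.symm ▸ hC)
          rwa [hunion] at this
        have hδsub : cutEdges G (C \ side G (s(r,q')) r) ⊆ (cutEdges G C).erase (s(r,q')) := by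
          intro g hg
          obtain ⟨hge, u, v, hgs, hu, hv⟩ := mem_cutEdges.mp hg
          rw [Finset.mem_sdiff] at hu
          obtain ⟨huC, huT⟩ := hu
          by_cases hvT : v ∈ side G (s(r,q')) r
          · exfalso
            have hgT : g ∈ cutEdges G (side G (s(r,q')) r) :=
              mem_cutEdges.mpr ⟨hge, v, u, by rw [hgs, Sym2.eq_swap], hvT, huT⟩
            rw [cutEdges_side htree hrq, Finset.mem_singleton] at hgT
            rw [hgT, Sym2.eq_iff] at hgs
            rcases hgs with ⟨h1, h2⟩ | ⟨h1, h2⟩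
            · exact huT (h1 ▸ hrT)
            · exact hq'C (h2 ▸ huC)
          · have hvC : v ∉ C := by
              intro hvC
              exact hv (Finset.mem_sdiff.mpr ⟨hvC, hvT⟩)
            refine Finset.mem_erase.mpr ⟨?_, mem_cutEdges.mpr ⟨hge, u, v, hgs, huC, hvC⟩⟩
            intro hgf
            rw [hgf, Sym2.eq_iff] at hgs
            rcases hgs with ⟨h1, h2⟩ | ⟨h1, h2⟩
            · exact huT (h1 ▸ hrT)
            · exact hq'C (h2 ▸ huC)
        have hcard2 : (cutEdges G (C \ side G (s(r,q')) r)).card ≤ n := by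
          calc (cutEdges G (C \ side G (s(r,q')) r)).card
              ≤ ((cutEdges G C).erase (s(r,q'))).card := Finset.card_le_card hδsub
            _ = (cutEdges G C).card - 1 := Finset.card_erase_of_mem hf
            _ ≤ (n + 1) - 1 := Nat.sub_le_sub_right hcard 1
            _ = n := rfl
        have hIH := ih _ hcard2 hCut2 i
        have hsum : ∑ g ∈ cutEdges G (C \ side G (s(r,q')) r), b i (compCut G g)
            ≤ ∑ g ∈ (cutEdges G C).erase (s(r,q')), b i (compCut G g) := by
          refine Finset.sum_le_sum_of_subset_of_nonneg hδsub ?_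
          intro g hg _
          have hge : g ∈ G.edgeFinset := (mem_cutEdges.mp (Finset.mem_of_mem_erase hg)).1
          exact hb i _ (compCut_spec htree hge).1
        calc b i C ≤ b i (side G (s(r,q')) r) + b i (C \ side G (s(r,q')) r) := hsplit
          _ ≤ b i (compCut G (s(r,q'))) + ∑ g ∈ (cutEdges G C).erase (s(r,q')),
                b i (compCut G g) := by
              exact add_le_add (le_of_eq hbside) (hIH.trans hsum)
          _ = ∑ g ∈ cutEdges G C, b i (compCut G g) :=
              Finset.add_sum_erase (cutEdges G C) (fun g => b i (compCut G g)) hf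
    intro C hcard hC i
    obtain ⟨f, r, q', hf, hrq, hfs, hgood⟩ := exists_good_side htree hC
    rcases hgood with hgood | hgood
    · exact aux C hcard hC f r q' hf hrq hfs hgood i
    · have hCc : IsCut Cᶜ := isCut_compl hC
      have hfc : f ∈ cutEdges G Cᶜ := by rw [cutEdges_compl]; exact hf
      have hsubc : side G f r ⊆ Cᶜ := by
        intro x hx
        exact Finset.mem_compl.mpr (hgood x hx)
      have := aux Cᶜ (by rw [cutEdges_compl]; exact hcard) hCc f r q' hfc hrq hfs hsubc i
      rw [cutEdges_compl] at this
      rw [hsymm i C hC]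
      exact this

/-- For a finite tree `T` and nonnegative, symmetric, sub-additive cut values,
`LP^L(T) = LP^U(T)`, and both optimum values equal `∑_{e∈E} ∑_i b^i(C_e)`. -/
theorem statement3 (V : Type) [Fintype V] [DecidableEq V] (G : SimpleGraph V)
    (htree : G.IsTree) (ℓ : ℕ) (hℓ : 1 ≤ ℓ) (b : Fin ℓ → Finset V → ℝ)
    (hb : CutNonneg ℓ b)
    (hsymm : ∀ (i : Fin ℓ) (C : Finset V), IsCut C → b i C = b i Cᶜ)
    (hsub : SubAdd ℓ b) :
    LPL G ℓ b = LPU G ℓ b ∧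
    LPL G ℓ b = ∑ e ∈ G.edgeFinset, ∑ i, b i (compCut G e) := by
  classical
  set t : ℝ := ∑ e ∈ G.edgeFinset, ∑ i, b i (compCut G e) with ht
  have hkey := keyB htree hb hsymm hsub
  -- the key inequality at arbitrary cuts
  have hkey' : ∀ (C : Finset V), IsCut C → ∀ i : Fin ℓ,
      b i C ≤ ∑ e ∈ cutEdges G C, b i (compCut G e) :=
    fun C hC i => hkey (cutEdges G C).card C le_rfl hC i
  have hδE : ∀ C : Finset V, cutEdges G C ⊆ G.edgeFinset := fun C => Finset.filter_subset _ _
  have hnn : ∀ (i : Fin ℓ) (e : Sym2 V), e ∈ G.edgeFinset → 0 ≤ b i (compCut G e) :=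
    fun i e he => hb i _ (compCut_spec htree he).1
  -- LPL = t
  have hL : LPL G ℓ b = t := by
    have hmem : t ∈ { y | ∃ x : Sym2 V → ℝ, (∀ e, 0 ≤ x e) ∧
        (∀ C : Finset V, IsCut C → ∑ i, b i C ≤ ∑ e ∈ cutEdges G C, x e) ∧
        y = ∑ e ∈ G.edgeFinset, x e } := by
      refine ⟨fun e => if e ∈ G.edgeFinset then ∑ i, b i (compCut G e) else 0, ?_, ?_, ?_⟩
      · intro e
        dsimp only
        split
        · exact Finset.sum_nonneg fun i _ => hnn i e (by assumption)
        · exact le_rfl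
      · intro C hC
        have h1 : ∑ i, b i C ≤ ∑ i, ∑ e ∈ cutEdges G C, b i (compCut G e) :=
          Finset.sum_le_sum fun i _ => hkey' C hC i
        rw [Finset.sum_comm] at h1
        refine h1.trans (le_of_eq ?_)
        refine Finset.sum_congr rfl fun e he => ?_
        dsimp only
        rw [if_pos (hδE C he)]
      · refine (Finset.sum_congr rfl fun e he => ?_).symm
        dsimp only
        rw [if_pos he]
    have hlb : ∀ y ∈ { y | ∃ x : Sym2 V → ℝ, (∀ e, 0 ≤ x e) ∧
        (∀ C : Finset V, IsCut C → ∑ i, b i C ≤ ∑ e ∈ cutEdges G C, x e) ∧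
        y = ∑ e ∈ G.edgeFinset, x e }, t ≤ y := by
      rintro y ⟨x, hx0, hfeas, rfl⟩
      refine Finset.sum_le_sum fun e he => ?_
      obtain ⟨hcut, hsing, -⟩ := compCut_spec htree he
      have := hfeas (compCut G e) hcut
      rwa [hsing, Finset.sum_singleton] at this
    exact IsLeast.csInf_eq ⟨hmem, hlb⟩
  have hU : LPU G ℓ b = t := by
    have hmem : t ∈ { y | ∃ x : Fin ℓ → Sym2 V → ℝ, (∀ i e, 0 ≤ x i e) ∧
        (∀ (i : Fin ℓ) (C : Finset V), IsCut C → b i C ≤ ∑ e ∈ cutEdges G C, x i e) ∧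
        y = ∑ i, ∑ e ∈ G.edgeFinset, x i e } := by
      refine ⟨fun i e => if e ∈ G.edgeFinset then b i (compCut G e) else 0, ?_, ?_, ?_⟩
      · intro i e
        dsimp only
        split
        · exact hnn i e (by assumption)
        · exact le_rfl
      · intro i C hC
        refine (hkey' C hC i).trans (le_of_eq ?_)
        refine Finset.sum_congr rfl fun e he => ?_
        dsimp only
        rw [if_pos (hδE C he)]
      · rw [ht, Finset.sum_comm]
        refine Finset.sum_congr rfl fun i _ => ?_
        refine (Finset.sum_congr rfl fun e he => ?_).symm
        dsimp only
        rw [if_pos he]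
    have hlb : ∀ y ∈ { y | ∃ x : Fin ℓ → Sym2 V → ℝ, (∀ i e, 0 ≤ x i e) ∧
        (∀ (i : Fin ℓ) (C : Finset V), IsCut C → b i C ≤ ∑ e ∈ cutEdges G C, x i e) ∧
        y = ∑ i, ∑ e ∈ G.edgeFinset, x i e }, t ≤ y := by
      rintro y ⟨x, hx0, hfeas, rfl⟩
      rw [ht, Finset.sum_comm]
      refine Finset.sum_le_sum fun i _ => ?_
      refine Finset.sum_le_sum fun e he => ?_
      obtain ⟨hcut, hsing, -⟩ := compCut_spec htree he
      have := hfeas i (compCut G e) hcut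
      rwa [hsing, Finset.sum_singleton] at this
    exact IsLeast.csInf_eq ⟨hmem, hlb⟩
  rw [LPL, LPU] at *
  exact ⟨hL.trans hU.symm, hL⟩
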